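/- Suppose G is r-sparse, witnessed by a map f assigning each edge to an endpoint with at most r edges per vertex; write C(j) = f⁻¹(j). For each i, let p_i ∈ P be a point minimizing p ↦ dist(q_i, p) + Σ_{j : {i,j} ∈ C(j)} dist(p, q_j)/(r+1) over p ∈ P. Then for every assignment p*_1, …, p*_k ∈ P, Σ_{i=1}^k dist(q_i, p_i) + Σ_{{i,j}∈E} dist(p_i, p_j) ≤ (2r+1) · (Σ_{i=1}^k dist(q_i, p*_i) + Σ_{{i,j}∈E} dist(p*_i, p*_j)). That is, this assignment is a (2r+1)-approximation to the optimal SNN assignment. -/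

import Mathlib

open Finset

/-- The symmetric pairwise-distance function induced on unordered pairs by an
assignment `p : V → X`. -/
noncomputable def pairDist {V X : Type*} [MetricSpace X] (p : V → X) : Sym2 V → ℝ :=
  Sym2.lift ⟨fun i j => dist (p i) (p j), fun i j => dist_comm (p i) (p j)⟩

/-- suppose `G` is `r`-sparse, witnessed by `f` assigning each edge to an
endpoint with at most `r` edges per vertex, and for each `i` the label `p_i ∈ P` minimizes
`p ↦ dist(q_i, p) + Σ_{j : {i,j} ∈ C(j)} dist(p, q_j)/(r+1)` over `P` (where `C(j) = f⁻¹(j)`).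
Then `p` is a `(2r+1)`-approximation: its SNN cost is at most `(2r+1)` times the SNN cost of
any assignment `p*` with values in `P`. -/
theorem aggregate_nn_approximation
    {X : Type*} [MetricSpace X] {k : ℕ} (hk : 1 ≤ k)
    (P : Finset X) (hPne : P.Nonempty)
    (q : Fin k → X) (G : SimpleGraph (Fin k)) [DecidableRel G.Adj] [Fintype G.edgeSet]
    (r : ℕ) (f : Sym2 (Fin k) → Fin k)
    (hfEnd : ∀ e ∈ G.edgeSet, f e ∈ e)
    (hfSparse : ∀ v : Fin k, (G.edgeFinset.filter (fun e => f e = v)).card ≤ r)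
    (p : Fin k → X) (hpP : ∀ i, p i ∈ P)
    (hmin : ∀ i, ∀ p' ∈ P,
      dist (q i) (p i) +
          ∑ j ∈ Finset.univ.filter (fun j => G.Adj i j ∧ f s(i, j) = j),
            dist (p i) (q j) / ((r : ℝ) + 1) ≤
        dist (q i) p' +
          ∑ j ∈ Finset.univ.filter (fun j => G.Adj i j ∧ f s(i, j) = j),
            dist p' (q j) / ((r : ℝ) + 1))
    (ps : Fin k → X) (hpsP : ∀ i, ps i ∈ P) :
    ∑ i, dist (q i) (p i) + ∑ e ∈ G.edgeFinset, pairDist p e ≤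
      (2 * (r : ℝ) + 1) *
        (∑ i, dist (q i) (ps i) + ∑ e ∈ G.edgeFinset, pairDist ps e) := by
  have hr0 : (0:ℝ) ≤ (r:ℝ) := Nat.cast_nonneg r
  have hr1 : (0:ℝ) < (r:ℝ) + 1 := by positivity
  have hc : ((r:ℝ) + 1) ≠ 0 := ne_of_gt hr1
  set T : Finset (Fin k × Fin k) :=
    Finset.univ.filter (fun ij : Fin k × Fin k => G.Adj ij.1 ij.2 ∧ f s(ij.1, ij.2) = ij.2)
    with hT
  have memT : ∀ ij : Fin k × Fin k, ij ∈ T ↔ G.Adj ij.1 ij.2 ∧ f s(ij.1, ij.2) = ij.2 := by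
    intro ij; rw [hT, Finset.mem_filter]; simp
  -- injectivity of (i,j) ↦ s(i,j) on T
  have inj : ∀ a ∈ T, ∀ b ∈ T, s(a.1, a.2) = s(b.1, b.2) → a = b := by
    intro a ha b hb hab
    rw [memT] at ha hb
    have heq : a.2 = b.2 := by rw [← ha.2, ← hb.2, hab]
    rcases Sym2.eq_iff.mp hab with ⟨h1, h2⟩ | ⟨h1, h2⟩
    · exact Prod.ext h1 h2
    · exact absurd (h1.trans heq.symm) ha.1.ne
  -- transfer edge sums to sums over T
  have transfer : ∀ (H : Sym2 (Fin k) → ℝ) (F : Fin k → Fin k → ℝ),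
      (∀ i j, G.Adj i j → f s(i, j) = j → H s(i, j) = F i j) →
      ∑ e ∈ G.edgeFinset, H e = ∑ ij ∈ T, F ij.1 ij.2 := by
    intro H F hHF
    refine (Finset.sum_bij (fun ij _ => s(ij.1, ij.2)) ?_ ?_ ?_ ?_).symm
    · intro ij hij
      rw [memT] at hij
      exact SimpleGraph.mem_edgeFinset.mpr (G.mem_edgeSet.mpr hij.1)
    · intro a ha b hb hab
      exact inj a ha b hb hab
    · intro e he
      induction e using Sym2.ind with
      | _ a b =>
        have hadj : G.Adj a b := G.mem_edgeSet.mp (SimpleGraph.mem_edgeFinset.mp he)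
        have hf := hfEnd s(a, b) (G.mem_edgeSet.mpr hadj)
        rw [Sym2.mem_iff] at hf
        rcases hf with hf | hf
        · exact ⟨(b, a), (memT _).mpr ⟨hadj.symm, by rw [Sym2.eq_swap]; exact hf⟩, Sym2.eq_swap⟩
        · exact ⟨(a, b), (memT _).mpr ⟨hadj, hf⟩, rfl⟩
    · intro ij hij
      rw [memT] at hij
      exact (hHF ij.1 ij.2 hij.1 hij.2).symm
  -- splitting the sum over T into a double sum
  have split : ∀ F : Fin k → Fin k → ℝ,
      ∑ ij ∈ T, F ij.1 ij.2 =
        ∑ i, ∑ j ∈ Finset.univ.filter (fun j => G.Adj i j ∧ f s(i, j) = j), F i j := by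
    intro F
    rw [hT, Finset.sum_filter, Fintype.sum_prod_type]
    simp only [Finset.sum_filter]
  -- sparsity bound
  have sparse : ∀ u : Fin k → X,
      ∑ ij ∈ T, dist (q ij.2) (u ij.2) ≤ (r : ℝ) * ∑ j, dist (q j) (u j) := by
    intro u
    rw [← Finset.sum_fiberwise T (fun ij => ij.2) (fun ij => dist (q ij.2) (u ij.2)),
      Finset.mul_sum]
    refine Finset.sum_le_sum fun j _ => ?_
    have hcard : (T.filter (fun ij => ij.2 = j)).card ≤ r := by
      refine le_trans (Finset.card_le_card_of_injOn (fun ij => s(ij.1, ij.2)) ?_ ?_) (hfSparse j)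
      · intro ij hij
        rw [Finset.mem_coe, Finset.mem_filter] at hij
        obtain ⟨hijT, hj⟩ := hij
        rw [memT] at hijT
        rw [Finset.mem_coe, Finset.mem_filter]
        exact ⟨SimpleGraph.mem_edgeFinset.mpr (G.mem_edgeSet.mpr hijT.1),
          hj ▸ hijT.2⟩
      · intro a ha b hb hab
        simp only [Finset.coe_filter, Set.mem_setOf_eq] at ha hb
        exact inj a ha.1 b hb.1 hab
    calc ∑ ij ∈ T.filter (fun ij => ij.2 = j), dist (q ij.2) (u ij.2)
        = ∑ ij ∈ T.filter (fun ij => ij.2 = j), dist (q j) (u j) :=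
          Finset.sum_congr rfl (fun ij hij => by rw [(Finset.mem_filter.mp hij).2])
      _ = ((T.filter (fun ij => ij.2 = j)).card : ℝ) * dist (q j) (u j) := by
          rw [Finset.sum_const, nsmul_eq_mul]
      _ ≤ (r : ℝ) * dist (q j) (u j) := by
          apply mul_le_mul_of_nonneg_right _ dist_nonneg
          exact_mod_cast hcard
  -- minimality, summed and multiplied by (r+1)
  have hkey : ∑ i, (dist (q i) (p i) * ((r:ℝ) + 1) +
        ∑ j ∈ Finset.univ.filter (fun j => G.Adj i j ∧ f s(i, j) = j), dist (p i) (q j)) ≤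
      ∑ i, (dist (q i) (ps i) * ((r:ℝ) + 1) +
        ∑ j ∈ Finset.univ.filter (fun j => G.Adj i j ∧ f s(i, j) = j), dist (ps i) (q j)) := by
    refine Finset.sum_le_sum fun i _ => ?_
    have h := hmin i (ps i) (hpsP i)
    have h2 := mul_le_mul_of_nonneg_right h hr1.le
    rw [add_mul, add_mul, ← Finset.sum_div, ← Finset.sum_div,
      div_mul_cancel₀ _ hc, div_mul_cancel₀ _ hc] at h2
    exact h2
  -- assemble
  have hPDp : ∑ e ∈ G.edgeFinset, pairDist p e = ∑ ij ∈ T, dist (p ij.1) (p ij.2) :=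
    transfer (pairDist p) (fun i j => dist (p i) (p j)) (fun i j _ _ => by simp [pairDist])
  have hPDs : ∑ e ∈ G.edgeFinset, pairDist ps e = ∑ ij ∈ T, dist (ps ij.1) (ps ij.2) :=
    transfer (pairDist ps) (fun i j => dist (ps i) (ps j)) (fun i j _ _ => by simp [pairDist])
  have h1 : ∑ e ∈ G.edgeFinset, pairDist p e ≤
      (∑ ij ∈ T, dist (p ij.1) (q ij.2)) + ∑ ij ∈ T, dist (q ij.2) (p ij.2) := by
    rw [hPDp, ← Finset.sum_add_distrib]
    exact Finset.sum_le_sum fun ij _ => dist_triangle (p ij.1) (q ij.2) (p ij.2)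
  have h2 := sparse p
  have h3 := split (fun i j => dist (p i) (q j))
  have h3s := split (fun i j => dist (ps i) (q j))
  have h5 : ∑ ij ∈ T, dist (ps ij.1) (q ij.2) ≤
      (∑ ij ∈ T, dist (ps ij.1) (ps ij.2)) + ∑ ij ∈ T, dist (q ij.2) (ps ij.2) := by
    rw [← Finset.sum_add_distrib]
    refine Finset.sum_le_sum fun ij _ => ?_
    have := dist_triangle (ps ij.1) (ps ij.2) (q ij.2)
    rw [dist_comm (ps ij.2) (q ij.2)] at this
    exact this
  have h6 := sparse ps
  have h7 : (0:ℝ) ≤ ∑ e ∈ G.edgeFinset, pairDist ps e := by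
    rw [hPDs]; exact Finset.sum_nonneg fun ij _ => dist_nonneg
  have h9 : (0:ℝ) ≤ (r:ℝ) * ∑ e ∈ G.edgeFinset, pairDist ps e := mul_nonneg hr0 h7
  have conv : ∀ u : Fin k → X,
      ∑ i, (dist (q i) (u i) * ((r:ℝ) + 1) +
        ∑ j ∈ Finset.univ.filter (fun j => G.Adj i j ∧ f s(i, j) = j), dist (u i) (q j)) =
      (∑ i, dist (q i) (u i)) * ((r:ℝ) + 1) + ∑ ij ∈ T, dist (u ij.1) (q ij.2) := by
    intro u
    rw [Finset.sum_add_distrib, ← Finset.sum_mul, split (fun i j => dist (u i) (q j))]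
  have hkey' : (∑ i, dist (q i) (p i)) * ((r:ℝ) + 1) + ∑ ij ∈ T, dist (p ij.1) (q ij.2) ≤
      (∑ i, dist (q i) (ps i)) * ((r:ℝ) + 1) + ∑ ij ∈ T, dist (ps ij.1) (q ij.2) := by
    rw [← conv p, ← conv ps]; exact hkey
  rw [← hPDs] at *
  nlinarith [h1, h2, h5, h6, h7, h9, hkey', hr0]
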